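/- Let X be a compact metric space, let f : X → X be a continuous map, and let σ ∈ X be a fixed point of f. If the statistical basin B(δ_σ) = {x ∈ X : the empirical measures μ_k(x) converge weak-star to δ_σ} is dense in X, then there is a residual subset L ⊆ X such that every x ∈ L satisfies σ ∈ ω(x), where ω(x) is the ω-limit set of x under f. -/

import Mathlib

open MeasureTheory Filter Topology

/-- The Birkhoff average `(1/k) ∑_{l=0}^{k-1} g(f^l(x))`, i.e. the integral of the
observable `g` against the `k`-th empirical measure `μ_k(x) = (1/k) ∑_{l<k} δ_{f^l(x)}`. -/
noncomputable def birkhoffAvg {X : Type*} (f : X → X) (g : X → ℝ) (x : X) (k : ℕ) : ℝ :=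
  (∑ l ∈ Finset.range k, g (f^[l] x)) / k

/-- Let `X` be a compact metric space, `f : X → X` continuous and `σ` a fixed point of `f`.
If the statistical basin `B(δ_σ) = {x : μ_k(x) → δ_σ weak-star}` (i.e. the points `x`
such that the Birkhoff averages of every continuous function `h` converge to
`h σ = ∫ h dδ_σ`) is dense in `X`, then there is a residual set `L ⊆ X` such that every
`x ∈ L` satisfies `σ ∈ ω(x)`, i.e. `σ` is an accumulation point of the forward orbit
`(f^n(x))_{n ≥ 0}`. -/
theorem residual_omega_limit_of_dense_basin {X : Type*} [MetricSpace X] [CompactSpace X]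
    (f : X → X) (hf : Continuous f) (σ : X) (hσ : f σ = σ)
    (hdense : Dense {x : X | ∀ h : X → ℝ, Continuous h →
      Tendsto (birkhoffAvg f h x) atTop (𝓝 (h σ))}) :
    ∃ L ∈ residual X, ∀ x ∈ L, MapClusterPt σ atTop (fun n : ℕ => f^[n] x) := by
  set B := {x : X | ∀ h : X → ℝ, Continuous h →
      Tendsto (birkhoffAvg f h x) atTop (𝓝 (h σ))} with hB
  set U : ℕ → Set X := fun n =>
    {x : X | ∃ m, n + 1 ≤ m ∧ dist (f^[m] x) σ < 1 / (n + 1 : ℝ)} with hU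
  -- every point of the basin enters every neighborhood of σ at arbitrarily late times
  have hBU : ∀ n, B ⊆ U n := by
    intro n x hx
    by_contra hcon
    simp only [hU, Set.mem_setOf_eq, not_exists, not_and, not_lt] at hcon
    set ε : ℝ := 1 / (n + 1 : ℝ) with hε
    have hεpos : (0 : ℝ) < ε := by positivity
    set h : X → ℝ := fun y => max 0 (1 - dist y σ / ε) with hh
    have hc : Continuous h := by
      apply Continuous.max continuous_const
      exact continuous_const.sub ((continuous_dist.comp
        (continuous_id.prodMk continuous_const)).div_const ε)
    have hσ1 : h σ = 1 := by simp [hh, dist_self]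
    have hzero : ∀ m, n + 1 ≤ m → h (f^[m] x) = 0 := by
      intro m hm
      have h1 : ε ≤ dist (f^[m] x) σ := hcon m hm
      have h2 : 1 ≤ dist (f^[m] x) σ / ε := (one_le_div hεpos).2 h1
      have : 1 - dist (f^[m] x) σ / ε ≤ 0 := by linarith
      simp [hh, max_eq_left this]
    have hev : ∀ᶠ k in atTop, birkhoffAvg f h x k
        = (∑ l ∈ Finset.range (n + 1), h (f^[l] x)) / k := by
      filter_upwards [eventually_ge_atTop (n + 1)] with k hk
      unfold birkhoffAvg
      congr 1
      refine (Finset.sum_subset (Finset.range_subset_range.2 hk) ?_).symm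
      intro l _ hln
      simp only [Finset.mem_range, not_lt] at hln
      exact hzero l hln
    have h0 : Tendsto (birkhoffAvg f h x) atTop (𝓝 0) :=
      Tendsto.congr' (hev.mono fun k hk => hk.symm)
        (tendsto_const_div_atTop_nhds_zero_nat (∑ l ∈ Finset.range (n + 1), h (f^[l] x)))
    have := tendsto_nhds_unique (hx h hc) h0
    rw [hσ1] at this
    norm_num at this
  have hUopen : ∀ n, IsOpen (U n) := by
    intro n
    have : U n = ⋃ m ∈ {m : ℕ | n + 1 ≤ m},
        (f^[m]) ⁻¹' Metric.ball σ (1 / (n + 1 : ℝ)) := by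
      ext x; simp [hU, Metric.mem_ball]
    rw [this]
    exact isOpen_biUnion fun m _ => Metric.isOpen_ball.preimage (hf.iterate m)
  have hUdense : ∀ n, Dense (U n) := fun n => hdense.mono (hBU n)
  refine ⟨⋂ n, U n, ?_, ?_⟩
  · rw [mem_residual_iff]
    exact ⟨Set.range U, by rintro t ⟨n, rfl⟩; exact hUopen n,
      by rintro t ⟨n, rfl⟩; exact hUdense n, Set.countable_range U,
      by rw [Set.sInter_range]⟩
  · intro x hx
    rw [mapClusterPt_iff_frequently]
    intro s hs
    rw [frequently_atTop]
    intro N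
    obtain ⟨ε, hεpos, hball⟩ := Metric.mem_nhds_iff.mp hs
    obtain ⟨k0, hk0⟩ := exists_nat_one_div_lt hεpos
    set n := max N k0 with hn
    obtain ⟨m, hm, hdist⟩ := Set.mem_iInter.mp hx n
    refine ⟨m, le_trans (le_trans (le_max_left N k0) (Nat.le_succ n)) hm, ?_⟩
    apply hball
    refine Metric.mem_ball.mpr (lt_of_lt_of_le hdist ?_ |>.trans_le (le_of_lt hk0))
    apply one_div_le_one_div_of_le (by positivity)
    have : (k0 : ℝ) ≤ n := by exact_mod_cast le_max_right N k0
    linarith
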